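/- Let n ≥ 1 and let v ∈ ℝⁿ be weakly decreasing with v₁ + ⋯ + v_n = 0 and v_i − v_{i+1} ≤ 1 for all 1 ≤ i ≤ n−1. Then v lies in the convex hull of the orbit {σ·ρ : σ ∈ S_n} of the Weyl vector ρ under the action of the symmetric group S_n permuting coordinates. -/

import Mathlib

private noncomputable def wlam (m : ℕ) (v : Fin (m+1) → ℝ) (s : Fin (m+1)) : ℝ :=
  (1 + v (-s) - v (-s - 1)) / ((m : ℝ) + 1)

private lemma wlam_sum (m : ℕ) (v : Fin (m+1) → ℝ) (hsum : ∑ i, v i = 0) :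
    ∑ s, wlam m v s = 1 := by
  have h1 : ∑ s : Fin (m+1), v (-s) = 0 := by
    rw [← hsum]; exact Equiv.sum_comp (Equiv.neg (Fin (m+1))) v
  have h2 : ∑ s : Fin (m+1), v (-s - 1) = 0 := by
    rw [← hsum]
    have := Equiv.sum_comp (Equiv.subLeft (-1 : Fin (m+1))) v
    simp only [Equiv.subLeft_apply] at this
    rw [← this]
    apply Finset.sum_congr rfl; intro t _; congr 1; abel
  unfold wlam
  rw [← Finset.sum_div]
  rw [Finset.sum_sub_distrib, Finset.sum_add_distrib, h1, h2]
  simp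
  field_simp
  exact Nat.cast_add_one_ne_zero m


private lemma wlam_nonneg (m : ℕ) (v : Fin (m+1) → ℝ)
    (hdec : ∀ i j : Fin (m+1), i ≤ j → v j ≤ v i)
    (hgap : ∀ i j : Fin (m+1), (i : ℕ) + 1 = (j : ℕ) → v i - v j ≤ 1)
    (s : Fin (m+1)) : 0 ≤ wlam m v s := by
  have h : v (-s - 1) - v (-s) ≤ 1 := by
    rcases eq_or_ne (-s) 0 with h0 | h0
    · rw [h0]
      have := hdec 0 (0 - 1 : Fin (m+1)) (Fin.zero_le _)
      linarith
    · refine hgap _ _ ?_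
      rw [Fin.coe_sub_one, if_neg h0]
      have : ((-s : Fin (m+1)) : ℕ) ≠ 0 := fun hv => h0 (Fin.ext (by simp [hv]))
      omega
  unfold wlam
  apply div_nonneg _ (by positivity)
  linarith

private lemma wcoef (m : ℕ) (t : Fin (m+1)) :
    ((t : ℕ) : ℝ) - (((t - 1 : Fin (m+1)) : ℕ) : ℝ)
      = 1 - (if t = 0 then ((m : ℝ) + 1) else 0) := by
  rcases eq_or_ne t 0 with rfl | ht
  · rw [Fin.coe_sub_one, if_pos rfl, if_pos rfl]
    simp
  · rw [Fin.coe_sub_one, if_neg ht, if_neg ht]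
    have h1 : ((t : ℕ)) ≠ 0 := fun h => ht (Fin.ext (by simp [h]))
    have : (1:ℕ) ≤ (t:ℕ) := Nat.one_le_iff_ne_zero.mpr h1
    push_cast [Nat.cast_sub this]
    ring

private lemma wS (m : ℕ) (v : Fin (m+1) → ℝ) (hsum : ∑ i, v i = 0) (i : Fin (m+1)) :
    ∑ s : Fin (m+1), wlam m v s * (((s + i : Fin (m+1)) : ℕ) : ℝ)
      = (m : ℝ) / 2 - v i := by
  -- reindex s = t - i
  have e1 : ∑ s : Fin (m+1), wlam m v s * (((s + i : Fin (m+1)) : ℕ) : ℝ)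
      = ∑ t : Fin (m+1), wlam m v (t - i) * ((t : ℕ) : ℝ) := by
    rw [← Equiv.sum_comp (Equiv.subRight i)
      (fun s => wlam m v s * (((s + i : Fin (m+1)) : ℕ) : ℝ))]
    apply Finset.sum_congr rfl
    intro t _
    simp [sub_add_cancel]
  rw [e1]
  have e2 : ∀ t : Fin (m+1), wlam m v (t - i)
      = (1 + v (i - t) - v (i - t - 1)) / ((m : ℝ) + 1) := by
    intro t; unfold wlam; rw [neg_sub]
  simp only [e2]
  have hA : ∑ t : Fin (m+1), ((t : ℕ) : ℝ) = ((m : ℝ) + 1) * m / 2 := by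
    have h2 := Finset.sum_range_id_mul_two (m+1)
    have h3 : ((∑ j ∈ Finset.range (m+1), j : ℕ) : ℝ) * 2 = ((m : ℝ) + 1) * m := by
      exact_mod_cast congrArg (Nat.cast : ℕ → ℝ) h2
    rw [Fin.sum_univ_eq_sum_range (fun k => ((k : ℕ) : ℝ))]
    push_cast at h3 ⊢
    linarith
  have hC : ∑ t : Fin (m+1), ((t : ℕ) : ℝ) * v (i - t - 1)
      = ∑ t : Fin (m+1), (((t - 1 : Fin (m+1)) : ℕ) : ℝ) * v (i - t) := by
    rw [← Equiv.sum_comp (Equiv.subRight (1 : Fin (m+1)))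
      (fun t => ((t : ℕ) : ℝ) * v (i - t - 1))]
    apply Finset.sum_congr rfl
    intro t _
    simp only [Equiv.subRight_apply]
    congr 2
    abel
  have hsum2 : ∑ t : Fin (m+1), v (i - t) = 0 := by
    rw [← hsum]
    have := Equiv.sum_comp (Equiv.subLeft i) v
    simpa using this
  have hite : ∑ t : Fin (m+1), (if t = 0 then ((m : ℝ) + 1) else 0) * v (i - t)
      = ((m : ℝ) + 1) * v i := by
    rw [Finset.sum_eq_single (0 : Fin (m+1))]
    · simp
    · intro b _ hb; rw [if_neg hb, zero_mul]
    · simp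
  have hBC : ∑ t : Fin (m+1), ((t : ℕ) : ℝ) * v (i - t)
      - ∑ t : Fin (m+1), ((t : ℕ) : ℝ) * v (i - t - 1)
      = -(((m : ℝ) + 1) * v i) := by
    rw [hC, ← Finset.sum_sub_distrib]
    have : ∀ t : Fin (m+1), ((t : ℕ) : ℝ) * v (i - t)
        - (((t - 1 : Fin (m+1)) : ℕ) : ℝ) * v (i - t)
        = v (i - t) - (if t = 0 then ((m : ℝ) + 1) else 0) * v (i - t) := by
      intro t
      rw [← sub_mul, wcoef m t, sub_mul, one_mul]
    simp only [this]
    rw [Finset.sum_sub_distrib, hsum2, hite]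
    ring
  have expand : ∀ t : Fin (m+1),
      (1 + v (i - t) - v (i - t - 1)) / ((m : ℝ) + 1) * ((t : ℕ) : ℝ)
      = (((t : ℕ) : ℝ) + ((t : ℕ) : ℝ) * v (i - t) - ((t : ℕ) : ℝ) * v (i - t - 1))
        / ((m : ℝ) + 1) := by
    intro t; ring
  simp only [expand]
  rw [← Finset.sum_div, Finset.sum_sub_distrib, Finset.sum_add_distrib, hA]
  have hm1 : ((m : ℝ) + 1) ≠ 0 := by positivity
  rw [div_eq_iff hm1]
  linear_combination hBC

theorem mem_convexHull_weylOrbit_of_gaps_le_one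
    (n : ℕ) (hn : 1 ≤ n) (v : Fin n → ℝ)
    (hdec : ∀ i j : Fin n, i ≤ j → v j ≤ v i)
    (hsum : ∑ i, v i = 0)
    (hgap : ∀ i j : Fin n, (i : ℕ) + 1 = (j : ℕ) → v i - v j ≤ 1) :
    v ∈ convexHull ℝ
      {w : Fin n → ℝ | ∃ σ : Equiv.Perm (Fin n),
        w = fun i => ((n : ℝ) + 1 - 2 * ((σ i : ℕ) + 1)) / 2} := by
  obtain ⟨m, rfl⟩ : ∃ m, n = m + 1 := ⟨n - 1, by omega⟩
  set S : Set (Fin (m+1) → ℝ) :=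
    {w : Fin (m+1) → ℝ | ∃ σ : Equiv.Perm (Fin (m+1)),
        w = fun i => (((m+1 : ℕ) : ℝ) + 1 - 2 * ((σ i : ℕ) + 1)) / 2} with hS
  set z : Fin (m+1) → (Fin (m+1) → ℝ) :=
    fun s => fun i => (((m+1 : ℕ) : ℝ) + 1 - 2 * (((Equiv.addLeft s i : Fin (m+1)) : ℕ) + 1)) / 2
    with hz
  have hzmem : ∀ s ∈ Finset.univ, z s ∈ S := fun s _ => ⟨Equiv.addLeft s, rfl⟩
  have hsum1 : ∑ s : Fin (m+1), wlam m v s = 1 := wlam_sum m v hsum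
  have hmem := Finset.centerMass_mem_convexHull (Finset.univ)
    (fun s _ => wlam_nonneg m v hdec hgap s) (by rw [hsum1]; norm_num) hzmem
  rw [Finset.centerMass_eq_of_sum_1 _ _ hsum1] at hmem
  have hv : ∑ s : Fin (m+1), wlam m v s • z s = v := by
    funext i
    rw [Finset.sum_apply]
    have hterm : ∀ s : Fin (m+1), (wlam m v s • z s) i
        = wlam m v s * ((m : ℝ) / 2) - wlam m v s * (((s + i : Fin (m+1)) : ℕ) : ℝ) := by
      intro s
      have : z s i = (m : ℝ) / 2 - (((s + i : Fin (m+1)) : ℕ) : ℝ) := by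
        rw [hz]
        simp only [Equiv.coe_addLeft]
        push_cast
        ring
      rw [Pi.smul_apply, this, smul_eq_mul]
      ring
    simp only [hterm]
    rw [Finset.sum_sub_distrib, ← Finset.sum_mul, hsum1, wS m v hsum i]
    ring
  rwa [hv] at hmem
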